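/- Convolution operators with Sobolev-weighted kernels are bounded on weighted sup-norm spaces (Lemma 6.9): Let m > 1/2 and κ ∈ (0, m − 1/2). Then there is a constant C, depending only on m and κ, such that for every measurable kernel H:ℝ→ℂ with M := (∫_ℝ (1+z²)^m |H(z)|² dz)^{1/2} < ∞ and every continuous u:ℝ→ℂ with ‖u‖_{C⁰_κ} < ∞, the convolution H*u satisfies ‖H * u‖_{C⁰_κ} ≤ C · M · ‖u‖_{C⁰_κ}. (By Plancherel, M equals the H^m(ℝ) norm of the Fourier transform of H.) -/

import Mathlib

open MeasureTheory Set

/-- Convolution operators with Sobolev-weighted kernels are bounded on weighted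
sup-norm spaces (Lemma 6.9): for `m > 1/2` and `κ ∈ (0, m - 1/2)` there is `C`
such that for every kernel `H` with `M = (∫ (1+z²)^m |H(z)|² dz)^{1/2} < ∞` and
every continuous `u` with `‖u‖_{C⁰_κ} < ∞`, `‖H*u‖_{C⁰_κ} ≤ C M ‖u‖_{C⁰_κ}`. -/
theorem convolution_sobolev_kernel_bound
    (m κ : ℝ) (hm : 1 / 2 < m) (hκ : κ ∈ Ioo (0 : ℝ) (m - 1 / 2)) :
    ∃ C > (0 : ℝ), ∀ H : ℝ → ℂ, Measurable H →
      MeasureTheory.Integrable (fun z : ℝ => (1 + z ^ 2) ^ m * ‖H z‖ ^ 2) →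
      ∀ u : ℝ → ℂ, Continuous u →
        ∀ Mu : ℝ, (∀ x : ℝ, (1 + x ^ 2) ^ (-(κ / 2)) * ‖u x‖ ≤ Mu) →
          ∀ x : ℝ,
            (1 + x ^ 2) ^ (-(κ / 2)) * ‖∫ y : ℝ, H (x - y) * u y‖ ≤
              C * Real.sqrt (∫ z : ℝ, (1 + z ^ 2) ^ m * ‖H z‖ ^ 2) * Mu := by
  obtain ⟨hκ0, hκm⟩ := hκ
  have hbase : ∀ t : ℝ, (0:ℝ) < 1 + t ^ 2 := fun t => by positivity
  have hsq : ∀ (a p : ℝ), 0 < a → (a ^ p) ^ (2:ℕ) = a ^ (p * 2) := by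
    intro a p ha
    rw [Real.rpow_mul ha.le, Real.rpow_two]
  -- the integrable weight
  have hψ : Integrable (fun z : ℝ => (1 + z ^ 2) ^ (κ - m)) := by
    have := integrable_rpow_neg_one_add_norm_sq (E := ℝ) (μ := volume) (r := 2*(m-κ))
      (by simp; linarith)
    convert this using 2 with z
    simp [Real.norm_eq_abs, sq_abs]; ring
  set I : ℝ := ∫ z : ℝ, (1 + z ^ 2) ^ (κ - m) with hI
  have hIpos : 0 < I := by
    rw [hI, integral_pos_iff_support_of_nonneg (fun z => by positivity) hψ]
    have : (Function.support fun z : ℝ => (1 + z ^ 2) ^ (κ - m)) = univ := by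
      ext z; simp only [Function.mem_support, mem_univ, iff_true]
      positivity
    rw [this]; simp
  refine ⟨(2:ℝ) ^ (κ/2) * Real.sqrt I, by positivity, ?_⟩
  intro H hH hHint u hu Mu hMu x
  have hMu0 : 0 ≤ Mu := le_trans (by positivity) (hMu 0)
  set A : ℝ := 1 + x ^ 2 with hA
  have hA0 : 0 < A := hbase x
  set F : ℝ → ℝ := fun y => ‖H (x - y)‖ * (1 + (x - y) ^ 2) ^ (m/2) with hF
  set G : ℝ → ℝ := fun y => (1 + (x - y) ^ 2) ^ (-(m/2)) * (1 + y ^ 2) ^ (κ/2) with hG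
  have hFmeas : Measurable F := by fun_prop
  have hGmeas : Measurable G := by fun_prop
  have hm2 : m / 2 * 2 = m := by ring
  have hFval : ∀ y : ℝ, F y ^ 2 = (1 + (x - y) ^ 2) ^ m * ‖H (x - y)‖ ^ 2 := by
    intro y
    simp only [hF, mul_pow, hsq _ _ (hbase (x - y)), hm2]
    ring
  have hF2 : Integrable (fun y => F y ^ 2) := by
    refine (hHint.comp_sub_left x).congr (Filter.Eventually.of_forall fun y => ?_)
    exact (hFval y).symm
  have hF2val : (∫ y, F y ^ 2) = ∫ z : ℝ, (1 + z ^ 2) ^ m * ‖H z‖ ^ 2 := by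
    rw [← integral_sub_left_eq_self (fun z : ℝ => (1 + z ^ 2) ^ m * ‖H z‖ ^ 2) volume x]
    exact integral_congr_ae (Filter.Eventually.of_forall fun y => hFval y)
  -- Peetre-type bound for G²
  have hGbound : ∀ y : ℝ, G y ^ 2 ≤ 2 ^ κ * A ^ κ * (1 + (x - y) ^ 2) ^ (κ - m) := by
    intro y
    have hp : (1:ℝ) + y ^ 2 ≤ 2 * A * (1 + (x - y) ^ 2) := by
      simp only [hA]
      nlinarith [sq_nonneg (1 + x*(x-y)), sq_nonneg (x*(x-y)), sq_nonneg (x-y), sq_nonneg x]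
    have h2 : ((1:ℝ) + y ^ 2) ^ κ ≤ (2 * A * (1 + (x - y) ^ 2)) ^ κ :=
      Real.rpow_le_rpow (hbase y).le hp hκ0.le
    have h3 : ((2:ℝ) * A * (1 + (x - y) ^ 2)) ^ κ
        = 2 ^ κ * A ^ κ * (1 + (x - y) ^ 2) ^ κ := by
      rw [Real.mul_rpow (by positivity) (hbase (x-y)).le, Real.mul_rpow (by norm_num) hA0.le]
    have h4 : G y ^ 2 = (1 + (x - y) ^ 2) ^ (-m) * (1 + y ^ 2) ^ κ := by
      have hκ2 : κ / 2 * 2 = κ := by ring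
      have hm2' : -(m/2) * 2 = -m := by ring
      simp only [hG, mul_pow, hsq _ _ (hbase (x - y)), hsq _ _ (hbase y), hκ2, hm2']
    have h5 : (1 + (x - y) ^ 2) ^ (-m) * (1 + (x - y) ^ 2) ^ κ
        = (1 + (x - y) ^ 2) ^ (κ - m) := by
      rw [← Real.rpow_add (hbase (x-y))]
      ring_nf
    calc G y ^ 2 = (1 + (x - y) ^ 2) ^ (-m) * (1 + y ^ 2) ^ κ := h4
      _ ≤ (1 + (x - y) ^ 2) ^ (-m) * (2 ^ κ * A ^ κ * (1 + (x - y) ^ 2) ^ κ) :=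
          mul_le_mul_of_nonneg_left (h2.trans_eq h3) (by positivity)
      _ = 2 ^ κ * A ^ κ * ((1 + (x - y) ^ 2) ^ (-m) * (1 + (x - y) ^ 2) ^ κ) := by ring
      _ = 2 ^ κ * A ^ κ * (1 + (x - y) ^ 2) ^ (κ - m) := by rw [h5]
  have hG2 : Integrable (fun y => G y ^ 2) := by
    refine Integrable.mono' (((hψ.comp_sub_left x).const_mul (2 ^ κ * A ^ κ)))
      ((hGmeas.pow_const 2).aestronglyMeasurable) (Filter.Eventually.of_forall fun y => ?_)
    rw [Real.norm_eq_abs, abs_of_nonneg (by positivity)]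
    exact hGbound y
  have hG2val : (∫ y, G y ^ 2) ≤ 2 ^ κ * A ^ κ * I := by
    calc (∫ y, G y ^ 2)
        ≤ ∫ y, 2 ^ κ * A ^ κ * (1 + (x - y) ^ 2) ^ (κ - m) :=
          integral_mono_of_nonneg (Filter.Eventually.of_forall fun y => by positivity)
            ((hψ.comp_sub_left x).const_mul _)
            (Filter.Eventually.of_forall hGbound)
      _ = 2 ^ κ * A ^ κ * I := by
          rw [integral_const_mul, hI,
            integral_sub_left_eq_self (fun z : ℝ => (1 + z ^ 2) ^ (κ - m)) volume x]
  have hFL2 : MemLp F 2 volume :=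
    (memLp_two_iff_integrable_sq hFmeas.aestronglyMeasurable).2 hF2
  have hGL2 : MemLp G 2 volume :=
    (memLp_two_iff_integrable_sq hGmeas.aestronglyMeasurable).2 hG2
  have hFG : Integrable (fun y => F y * G y) := by
    refine Integrable.mono' (((hF2.add hG2).div_const 2))
      ((hFmeas.mul hGmeas).aestronglyMeasurable) (Filter.Eventually.of_forall fun y => ?_)
    rw [Real.norm_eq_abs, abs_of_nonneg (by positivity)]
    simp only [Pi.div_apply, Pi.add_apply]
    nlinarith [sq_nonneg (F y - G y)]
  have hptwise : ∀ y : ℝ, ‖H (x - y) * u y‖ ≤ Mu * (F y * G y) := by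
    intro y
    have hB0 : (0:ℝ) < 1 + y ^ 2 := hbase y
    have hpos : (0:ℝ) < (1 + y ^ 2) ^ (κ/2) := Real.rpow_pos_of_pos hB0 _
    have hu' : ‖u y‖ ≤ Mu * (1 + y ^ 2) ^ (κ/2) := by
      have h := hMu y
      rw [Real.rpow_neg hB0.le] at h
      calc ‖u y‖ = ((1 + y ^ 2) ^ (κ/2))⁻¹ * ‖u y‖ * (1 + y ^ 2) ^ (κ/2) := by
            field_simp
        _ ≤ Mu * (1 + y ^ 2) ^ (κ/2) := mul_le_mul_of_nonneg_right h hpos.le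
    have hFG' : F y * G y = ‖H (x - y)‖ * (1 + y ^ 2) ^ (κ/2) := by
      simp only [hF, hG]
      rw [Real.rpow_neg (hbase (x-y)).le]
      have hne : ((1:ℝ) + (x - y) ^ 2) ^ (m/2) ≠ 0 :=
        (Real.rpow_pos_of_pos (hbase (x-y)) _).ne'
      field_simp
    rw [norm_mul, hFG']
    calc ‖H (x - y)‖ * ‖u y‖ ≤ ‖H (x - y)‖ * (Mu * (1 + y ^ 2) ^ (κ/2)) :=
          mul_le_mul_of_nonneg_left hu' (norm_nonneg _)
      _ = Mu * (‖H (x - y)‖ * (1 + y ^ 2) ^ (κ/2)) := by ring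
  have step1 : ‖∫ y : ℝ, H (x - y) * u y‖ ≤ Mu * ∫ y, F y * G y := by
    rw [← integral_const_mul]
    calc ‖∫ y : ℝ, H (x - y) * u y‖ ≤ ∫ y, ‖H (x - y) * u y‖ :=
          norm_integral_le_integral_norm _
      _ ≤ ∫ y, Mu * (F y * G y) :=
          integral_mono_of_nonneg (Filter.Eventually.of_forall fun y => norm_nonneg _)
            (hFG.const_mul Mu) (Filter.Eventually.of_forall hptwise)
  have hconj : Real.HolderConjugate 2 2 := ⟨by norm_num, by norm_num, by norm_num⟩
  have holder : (∫ y, F y * G y)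
      ≤ (∫ y, F y ^ 2) ^ ((1:ℝ)/2) * (∫ y, G y ^ 2) ^ ((1:ℝ)/2) := by
    have h2 : ENNReal.ofReal (2:ℝ) = 2 := by norm_num
    have := integral_mul_le_Lp_mul_Lq_of_nonneg (μ := volume) hconj
      (Filter.Eventually.of_forall (fun y => by positivity : ∀ y, (0:ℝ) ≤ F y))
      (Filter.Eventually.of_forall (fun y => by positivity : ∀ y, (0:ℝ) ≤ G y))
      (h2 ▸ hFL2) (h2 ▸ hGL2)
    have hcast : ∀ f : ℝ → ℝ, (∫ y, f y ^ (2:ℝ)) = ∫ y, f y ^ (2:ℕ) := by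
      intro f
      congr 1 with y
      rw [← Real.rpow_natCast (f y) 2]
      norm_num
    rw [hcast F, hcast G] at this
    exact_mod_cast this
  -- assemble
  have hintG : 0 ≤ ∫ y, G y ^ 2 := integral_nonneg fun y => sq_nonneg _
  have hM2 : 0 ≤ ∫ y, F y ^ 2 := integral_nonneg fun y => sq_nonneg _
  have hsqrtG : (∫ y, G y ^ 2) ^ ((1:ℝ)/2) ≤ 2 ^ (κ/2) * A ^ (κ/2) * Real.sqrt I := by
    calc (∫ y, G y ^ 2) ^ ((1:ℝ)/2) ≤ (2 ^ κ * A ^ κ * I) ^ ((1:ℝ)/2) :=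
          Real.rpow_le_rpow hintG hG2val (by norm_num)
      _ = 2 ^ (κ/2) * A ^ (κ/2) * Real.sqrt I := by
          rw [Real.mul_rpow (by positivity) hIpos.le,
            Real.mul_rpow (by positivity) (by positivity)]
          have e1 : ((2:ℝ) ^ κ) ^ ((1:ℝ)/2) = 2 ^ (κ/2) := by
            rw [← Real.rpow_mul (by norm_num)]; congr 1; ring
          have e2 : (A ^ κ) ^ ((1:ℝ)/2) = A ^ (κ/2) := by
            rw [← Real.rpow_mul hA0.le]; congr 1; ring
          rw [e1, e2, Real.sqrt_eq_rpow]
  have hone : A ^ (-(κ/2)) * A ^ (κ/2) = 1 := by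
    rw [← Real.rpow_add hA0]; norm_num
  calc A ^ (-(κ/2)) * ‖∫ y : ℝ, H (x - y) * u y‖
      ≤ A ^ (-(κ/2)) *
        (Mu * ((∫ y, F y ^ 2) ^ ((1:ℝ)/2) * (2 ^ (κ/2) * A ^ (κ/2) * Real.sqrt I))) := by
        refine mul_le_mul_of_nonneg_left ?_ (by positivity)
        refine step1.trans (mul_le_mul_of_nonneg_left ?_ hMu0)
        exact holder.trans (mul_le_mul_of_nonneg_left hsqrtG (Real.rpow_nonneg hM2 _))
    _ = (A ^ (-(κ/2)) * A ^ (κ/2)) *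
        (2 ^ (κ/2) * Real.sqrt I * Real.sqrt (∫ z : ℝ, (1 + z ^ 2) ^ m * ‖H z‖ ^ 2) * Mu) := by
        rw [hF2val, ← Real.sqrt_eq_rpow]
        ring
    _ = 2 ^ (κ/2) * Real.sqrt I * Real.sqrt (∫ z : ℝ, (1 + z ^ 2) ^ m * ‖H z‖ ^ 2) * Mu := by
        rw [hone]; ring
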